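/- Let n >= 4. Consider the fair-goods instance with n agents and n + 1 goods e_1, ..., e_{n+1} in which all agents have identical valuations: v_i(e_j) = 1/n^2 for 1 <= j <= n and v_i(e_{n+1}) = 1 - 1/n. Then OPT_E >= 1/n^2, but in every connected PROP1 allocation at least one agent receives an empty bundle, so every connected PROP1 allocation A has EW(A) = 0. Consequently the price of PROP1 with respect to egalitarian welfare for goods is infinite. -/

import Mathlib

open Finset

noncomputable section

/-- The value of a bundle `S` of items under additive (item-level) valuation `v`. -/
def bundleVal {m : ℕ} (v : Fin m → ℝ) (S : Finset (Fin m)) : ℝ := ∑ e ∈ S, v e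

/-- A bundle is connected if it is an interval of the line `e_1, …, e_m`. -/
def IsConnBundle {m : ℕ} (S : Finset (Fin m)) : Prop :=
  ∀ a ∈ S, ∀ c ∈ S, ∀ b : Fin m, a ≤ b → b ≤ c → b ∈ S

/-- A connected allocation: pairwise disjoint connected bundles covering all items. -/
def ConnAlloc (n m : ℕ) (A : Fin n → Finset (Fin m)) : Prop :=
  (∀ i, IsConnBundle (A i)) ∧
  (∀ i j : Fin n, i ≠ j → Disjoint (A i) (A j)) ∧
  (∀ e : Fin m, ∃ i, e ∈ A i)

/-- The maximin share of an agent with valuation `v`: the maximum over connected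
`n`-partitions of the minimum bundle value. -/
def mmsVal (n m : ℕ) (v : Fin m → ℝ) : ℝ :=
  sSup { x : ℝ | ∃ A : Fin n → Finset (Fin m), ConnAlloc n m A ∧ x = ⨅ j, bundleVal v (A j) }

/-- Utilitarian welfare of an allocation. -/
def utilW (n m : ℕ) (v : Fin n → Fin m → ℝ) (A : Fin n → Finset (Fin m)) : ℝ :=
  ∑ i, bundleVal (v i) (A i)

/-- Egalitarian welfare of an allocation. -/
def egalW (n m : ℕ) (v : Fin n → Fin m → ℝ) (A : Fin n → Finset (Fin m)) : ℝ :=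
  ⨅ i, bundleVal (v i) (A i)

/-- Optimal utilitarian welfare over all connected allocations. -/
def optU (n m : ℕ) (v : Fin n → Fin m → ℝ) : ℝ :=
  sSup { x : ℝ | ∃ A, ConnAlloc n m A ∧ x = utilW n m v A }

/-- Optimal egalitarian welfare over all connected allocations. -/
def optE (n m : ℕ) (v : Fin n → Fin m → ℝ) : ℝ :=
  sSup { x : ℝ | ∃ A, ConnAlloc n m A ∧ x = egalW n m v A }

/-- A connected allocation of goods is PROP1 if every agent either already has value at
least `1/n`, or gets value at least `1/n` after adding one item keeping connectivity. -/
def Prop1Goods (n m : ℕ) (v : Fin n → Fin m → ℝ) (A : Fin n → Finset (Fin m)) : Prop :=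
  ∀ i, (1 / (n : ℝ)) ≤ bundleVal (v i) (A i) ∨
    ∃ e : Fin m, e ∉ A i ∧ IsConnBundle (insert e (A i)) ∧
      (1 / (n : ℝ)) ≤ bundleVal (v i) (insert e (A i))

/-- The hard instance for Goods | Egalitarian | PROP1: with `n ≥ 4`
agents and `n + 1` goods, identical valuations `1/n²` on the first `n` items and
`1 - 1/n` on the last item, `OPT_E ≥ 1/n²`, but every connected PROP1 allocation
leaves some agent empty-handed and hence has egalitarian welfare `0`. -/
theorem goods_egalitarian_prop1_infinite (n : ℕ) (hn : 4 ≤ n)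
    (v : Fin n → Fin (n + 1) → ℝ)
    (hv : ∀ i : Fin n, ∀ j : Fin (n + 1),
      v i j = if (j : ℕ) < n then 1 / (n : ℝ) ^ 2 else 1 - 1 / (n : ℝ)) :
    1 / (n : ℝ) ^ 2 ≤ optE n (n + 1) v ∧
    ∀ A : Fin n → Finset (Fin (n + 1)), ConnAlloc n (n + 1) A →
      Prop1Goods n (n + 1) v A →
      (∃ i, A i = ∅) ∧ egalW n (n + 1) v A = 0 := by

  haveI : NeZero n := ⟨by omega⟩
  have hnR : (4:ℝ) ≤ (n:ℝ) := by exact_mod_cast hn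
  have hnpos : (0:ℝ) < (n:ℝ) := by linarith
  have hn2pos : (0:ℝ) < (n:ℝ)^2 := by positivity
  have hvnonneg : ∀ i j, 0 ≤ v i j := by
    intro i j; rw [hv]
    split
    · positivity
    · rw [sub_nonneg, div_le_one hnpos]; linarith
  have htotal : ∀ i, ∑ e : Fin (n+1), v i e = 1 := by
    intro i
    rw [Fin.sum_univ_castSucc]
    have h1 : ∀ j : Fin n, v i (Fin.castSucc j) = 1/(n:ℝ)^2 := by
      intro j; rw [hv, if_pos]; exact j.isLt
    rw [Finset.sum_congr rfl (fun j _ => h1 j), Finset.sum_const, hv, if_neg (by simp),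
      Finset.card_univ, Fintype.card_fin, nsmul_eq_mul]
    field_simp
    ring
  have smallval : ∀ (i : Fin n) (S : Finset (Fin (n+1))), Fin.last n ∉ S →
      bundleVal (v i) S = (S.card : ℝ) / (n:ℝ)^2 := by
    intro i S hS
    unfold bundleVal
    have hmemval : ∀ e ∈ S, v i e = 1/(n:ℝ)^2 := by
      intro e he
      rw [hv, if_pos]
      have h1 : (e:ℕ) < n + 1 := e.isLt
      have hne : (e:ℕ) ≠ n := fun h => hS (by rwa [show e = Fin.last n from Fin.ext h] at he)
      omega
    rw [Finset.sum_congr rfl hmemval, Finset.sum_const, nsmul_eq_mul]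
    ring
  constructor
  · -- Part 1 : optE ≥ 1/n²
    set B : Fin n → Finset (Fin (n+1)) :=
      fun i => Finset.univ.filter (fun e => (e:ℕ) = (i:ℕ) ∨ ((e:ℕ) = n ∧ (i:ℕ) = n-1)) with hB
    have hmemB : ∀ (i : Fin n) (e : Fin (n+1)),
        e ∈ B i ↔ ((e:ℕ) = (i:ℕ) ∨ ((e:ℕ) = n ∧ (i:ℕ) = n-1)) := by
      intro i e; simp [hB]
    have hBconn : ConnAlloc n (n+1) B := by
      refine ⟨?_, ?_, ?_⟩
      · intro i a ha c hc b hab hbc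
        rw [hmemB] at ha hc ⊢
        rw [Fin.le_def] at hab hbc
        have hi := i.isLt
        omega
      · intro i j hij
        rw [Finset.disjoint_left]
        intro e he1 he2
        rw [hmemB] at he1 he2
        have hij' : (i:ℕ) ≠ (j:ℕ) := fun h => hij (Fin.ext h)
        have hi := i.isLt
        have hj := j.isLt
        omega
      · intro e
        by_cases he : (e:ℕ) < n
        · exact ⟨⟨(e:ℕ), he⟩, by rw [hmemB]; left; rfl⟩
        · refine ⟨⟨n-1, by omega⟩, ?_⟩
          rw [hmemB]
          right
          have := e.isLt
          exact ⟨by omega, rfl⟩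
    have hBval : 1 / (n:ℝ)^2 ≤ egalW n (n+1) v B := by
      apply le_ciInf
      intro i
      have hmem : (⟨(i:ℕ), by omega⟩ : Fin (n+1)) ∈ B i := by
        rw [hmemB]; left; rfl
      have hsingle := Finset.single_le_sum (f := v i) (fun e _ => hvnonneg i e) hmem
      have hval : v i ⟨(i:ℕ), by omega⟩ = 1/(n:ℝ)^2 := by
        rw [hv, if_pos]; exact i.isLt
      unfold bundleVal
      rw [← hval]
      exact hsingle
    have hbddA : BddAbove {x : ℝ | ∃ A, ConnAlloc n (n+1) A ∧ x = egalW n (n+1) v A} := by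
      refine ⟨1, ?_⟩
      rintro x ⟨A, hA, rfl⟩
      have h0 : egalW n (n+1) v A ≤ bundleVal (v ⟨0, by omega⟩) (A ⟨0, by omega⟩) :=
        ciInf_le (Set.finite_range _).bddBelow _
      refine h0.trans ?_
      calc bundleVal (v ⟨0, by omega⟩) (A ⟨0, by omega⟩)
          ≤ ∑ e : Fin (n+1), v ⟨0, by omega⟩ e :=
            Finset.sum_le_sum_of_subset_of_nonneg (Finset.subset_univ _)
              (fun e _ _ => hvnonneg _ e)
        _ = 1 := htotal _
    have hmem' : egalW n (n+1) v B ∈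
        {x : ℝ | ∃ A, ConnAlloc n (n+1) A ∧ x = egalW n (n+1) v A} := ⟨B, hBconn, rfl⟩
    exact hBval.trans (le_csSup hbddA hmem')
  · -- Part 2
    intro A hA hP
    obtain ⟨hconn, hdisj, hcov⟩ := hA
    have hempty : ∃ i, A i = ∅ := by
      by_contra hne
      push_neg at hne
      obtain ⟨k, hk⟩ := hcov (Fin.last n)
      obtain ⟨j, hj⟩ := hcov ⟨n-1, by omega⟩
      have key : ∀ i, i ≠ k → i ≠ j → n - 1 ≤ (A i).card := by
        intro i hik hij
        have hlast : Fin.last n ∉ A i :=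
          fun h => (Finset.disjoint_left.mp (hdisj i k hik) h) hk
        have hprev : (⟨n-1, by omega⟩ : Fin (n+1)) ∉ A i :=
          fun h => (Finset.disjoint_left.mp (hdisj i j hij) h) hj
        have hvalAi := smallval i (A i) hlast
        rcases hP i with h | ⟨e, he, hconn', hval'⟩
        · rw [hvalAi, div_le_div_iff₀ hnpos hn2pos] at h
          have hcard : (n:ℝ) ≤ ((A i).card : ℝ) := by nlinarith
          have : n ≤ (A i).card := by exact_mod_cast hcard
          omega
        · by_cases hel : e = Fin.last n
          · exfalso
            subst hel
            obtain ⟨a, ha⟩ := hne i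
            have ha' : a ∈ insert (Fin.last n) (A i) := Finset.mem_insert_of_mem ha
            have hl' : Fin.last n ∈ insert (Fin.last n) (A i) := Finset.mem_insert_self _ _
            have hane : (a:ℕ) ≠ n := fun h => hlast (by rwa [show a = Fin.last n from Fin.ext h] at ha)
            have h1 : a ≤ (⟨n-1, by omega⟩ : Fin (n+1)) := by
              rw [Fin.le_def]; have := a.isLt; simp; omega
            have h2 : (⟨n-1, by omega⟩ : Fin (n+1)) ≤ Fin.last n := Fin.le_last _
            have hpmem := hconn' a ha' (Fin.last n) hl' ⟨n-1, by omega⟩ h1 h2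
            rcases Finset.mem_insert.mp hpmem with h3 | h3
            · have : n - 1 = n := by
                have := congrArg Fin.val h3
                simpa using this
              omega
            · exact hprev h3
          · have hlast' : Fin.last n ∉ insert e (A i) := by
              intro h
              rcases Finset.mem_insert.mp h with h3 | h3
              · exact hel h3.symm
              · exact hlast h3
            rw [smallval i _ hlast', Finset.card_insert_of_notMem he] at hval'
            rw [div_le_div_iff₀ hnpos hn2pos] at hval'
            have hcard : (n:ℝ) ≤ (((A i).card : ℝ) + 1) := by push_cast at hval' ⊢; nlinarith
            have : n ≤ (A i).card + 1 := by exact_mod_cast hcard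
            omega
      have huniv : Finset.univ.biUnion A = Finset.univ := by
        apply Finset.eq_univ_of_forall
        intro e
        obtain ⟨i, hi⟩ := hcov e
        exact Finset.mem_biUnion.mpr ⟨i, Finset.mem_univ i, hi⟩
      have hsum : ∑ i, (A i).card = n + 1 := by
        rw [← Finset.card_biUnion (fun i _ j _ hij => hdisj i j hij), huniv,
          Finset.card_univ, Fintype.card_fin]
      have hc2 : n - 2 ≤ (Finset.univ \ {j, k} : Finset (Fin n)).card := by
        rw [Finset.card_sdiff_of_subset (Finset.subset_univ _), Finset.card_univ, Fintype.card_fin]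
        have hle : ({j, k} : Finset (Fin n)).card ≤ 2 := by
          refine (Finset.card_insert_le _ _).trans ?_
          simp
        omega
      have hbig : (n-2) * (n-1) ≤ ∑ i ∈ Finset.univ \ {j, k}, (A i).card := by
        calc (n-2) * (n-1) ≤ (Finset.univ \ {j, k} : Finset (Fin n)).card * (n-1) :=
              Nat.mul_le_mul_right _ hc2
          _ ≤ ∑ i ∈ Finset.univ \ {j, k}, (A i).card := by
              rw [← smul_eq_mul]
              apply Finset.card_nsmul_le_sum
              intro i hi
              rw [Finset.mem_sdiff, Finset.mem_insert, Finset.mem_singleton] at hi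
              push_neg at hi
              exact key i hi.2.2 hi.2.1
      have hsmall : ∑ i ∈ Finset.univ \ {j, k}, (A i).card ≤ n + 1 :=
        le_of_le_of_eq (Finset.sum_le_sum_of_subset Finset.sdiff_subset) hsum
      have h22 : 2 * (n-1) ≤ (n-2) * (n-1) := Nat.mul_le_mul_right _ (by omega)
      omega
    refine ⟨hempty, ?_⟩
    obtain ⟨i0, hi0⟩ := hempty
    have hle : egalW n (n+1) v A ≤ 0 := by
      have h0 : bundleVal (v i0) (A i0) = 0 := by
        rw [hi0]; simp [bundleVal]
      have := ciInf_le (f := fun i => bundleVal (v i) (A i)) (Set.finite_range _).bddBelow i0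
      rwa [h0] at this
    have hge : (0:ℝ) ≤ egalW n (n+1) v A := by
      apply le_ciInf
      intro i
      exact Finset.sum_nonneg (fun e _ => hvnonneg i e)
    exact le_antisymm hle hge
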